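/- In a generalized Cops and Robbers game, the Pursuer has a winning strategy if and only if there exists a start position p_P ∈ I_P such that for every q_E ∈ I_E(p_P) the stable label of the state ((p_P, q_E), P) in the state digraph D_G is finite. -/

import Mathlib

open Classical

/-- A generalized Cops and Robbers game on Pursuer positions `PP` and Evader positions `PE`.
`F` is the set of final positions, `I` the set of allowed start positions, and
`AP`/`AE` give the (nonempty) sets of allowed moves of the Pursuer/Evader from a
non-final position (a move changes only that player's own coordinate). -/
structure GCR (PP PE : Type*) where
  F : PP → PE → Prop
  I : PP → PE → Prop
  AP : PP → PE → Set PP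
  AE : PP → PE → Set PE
  I_nonempty : ∃ p q, I p q
  AP_nonempty : ∀ p q, ¬ F p q → (AP p q).Nonempty
  AE_nonempty : ∀ p q, ¬ F p q → (AE p q).Nonempty

namespace GCR

variable {PP PE : Type*}

/-- The Pursuer's allowed start positions `I_P`. -/
def IP (G : GCR PP PE) (p : PP) : Prop := ∃ q, G.I p q

/-- The Evader's allowed start positions `I_E(p)` against the Pursuer start `p`. -/
def IE (G : GCR PP PE) (p : PP) (q : PE) : Prop := G.I p q

/-- The sequence of relations `≼_i` from Evader positions to Pursuer positions:
`q ≼_0 p` iff `(p,q) ∈ F`; and for `i ≥ 1`, `q ≼_i p` iff `(p,q) ∈ F` or for every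
`x ∈ A_E(p,q)` either `(p,x) ∈ F` or there is `w ∈ A_P(p,x)` with `x ≼_j w` for some `j < i`. -/
def rel (G : GCR PP PE) : ℕ → PE → PP → Prop
  | 0, q, p => G.F p q
  | (i+1), q, p => G.F p q ∨
      ∀ x ∈ G.AE p q, G.F p x ∨ ∃ w ∈ G.AP p x, ∃ j, ∃ _ : j < i + 1, G.rel j x w
  termination_by i _ _ => i
  decreasing_by omega

/-- The stabilized relation `≼`. -/
def Rel (G : GCR PP PE) (q : PE) (p : PP) : Prop := ∃ i, G.rel i q p

/-- A strategy for the Pursuer: an initial position together with a move for every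
finite history of positions (most recent first). -/
structure PStrat (G : GCR PP PE) where
  init : PP
  move : List (PP × PE) → PP

/-- A strategy for the Evader: an initial position (depending on the Pursuer's choice)
together with a move for every finite history of positions (most recent first). -/
structure EStrat (G : GCR PP PE) where
  init : PP → PE
  move : List (PP × PE) → PE

/-- A Pursuer strategy plays allowed moves at every non-final position. -/
def PStrat.MovesValid {G : GCR PP PE} (σ : PStrat G) : Prop :=
  ∀ (h : List (PP × PE)) (c : PP × PE), ¬ G.F c.1 c.2 → σ.move (c :: h) ∈ G.AP c.1 c.2

/-- An Evader strategy plays allowed moves at every non-final position. -/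
def EStrat.MovesValid {G : GCR PP PE} (τ : EStrat G) : Prop :=
  ∀ (h : List (PP × PE)) (c : PP × PE), ¬ G.F c.1 c.2 → τ.move (c :: h) ∈ G.AE c.1 c.2

/-- A valid Pursuer strategy: the initial position is an allowed start position,
and all moves are allowed. -/
def PStrat.Valid {G : GCR PP PE} (σ : PStrat G) : Prop :=
  G.IP σ.init ∧ σ.MovesValid

/-- A valid Evader strategy: the initial position is an allowed response to any allowed
Pursuer start position, and all moves are allowed. -/
def EStrat.Valid {G : GCR PP PE} (τ : EStrat G) : Prop :=
  (∀ p, G.IP p → G.IE p (τ.init p)) ∧ τ.MovesValid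

/-- The play of the game determined by strategies `σ` and `τ`: first both players choose
their start positions, then they move alternately with the Pursuer moving first.
Returns the current position after `n` single moves together with the history so far. -/
def play (G : GCR PP PE) (σ : PStrat G) (τ : EStrat G) : ℕ → (PP × PE) × List (PP × PE)
  | 0 => ((σ.init, τ.init σ.init), [(σ.init, τ.init σ.init)])
  | (n+1) =>
      let s := play G σ τ n
      let nxt := if n % 2 = 0 then (σ.move s.2, s.1.2) else (s.1.1, τ.move s.2)
      (nxt, nxt :: s.2)

/-- The position after `n` single moves of the play determined by `σ` and `τ`. -/
def pos (G : GCR PP PE) (σ : PStrat G) (τ : EStrat G) (n : ℕ) : PP × PE :=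
  (play G σ τ n).1

/-- Play from a given mid-game position `start`; `pFirst = true` means the Pursuer is
next to move. The players move alternately. Returns the current position after `n`
single moves together with the history so far. -/
def playFrom (G : GCR PP PE) (σ : PStrat G) (τ : EStrat G) (start : PP × PE)
    (pFirst : Bool) : ℕ → (PP × PE) × List (PP × PE)
  | 0 => (start, [start])
  | (n+1) =>
      let s := playFrom G σ τ start pFirst n
      let nxt := if (decide (n % 2 = 0)) == pFirst
        then (σ.move s.2, s.1.2) else (s.1.1, τ.move s.2)
      (nxt, nxt :: s.2)

/-- The position after `n` single moves of the play from state `(start, pFirst)`. -/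
def posFrom (G : GCR PP PE) (σ : PStrat G) (τ : EStrat G) (start : PP × PE)
    (pFirst : Bool) (n : ℕ) : PP × PE :=
  (playFrom G σ τ start pFirst n).1

/-- The Pursuer has a winning strategy: a valid strategy such that against every valid
Evader strategy the position eventually belongs to `F`. -/
def PursuerWins (G : GCR PP PE) : Prop :=
  ∃ σ : PStrat G, σ.Valid ∧ ∀ τ : EStrat G, τ.Valid →
    ∃ n, G.F (pos G σ τ n).1 (pos G σ τ n).2

/-- The Evader has a winning strategy: a valid strategy such that against every valid
Pursuer strategy the position never belongs to `F`. -/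
def EvaderWins (G : GCR PP PE) : Prop :=
  ∃ τ : EStrat G, τ.Valid ∧ ∀ σ : PStrat G, σ.Valid →
    ∀ n, ¬ G.F (pos G σ τ n).1 (pos G σ τ n).2

/-! ### The state digraph and its labelling -/

/-- The initial labelling of the state digraph: final states get `0`, all others `∞`.
A state is a position together with a `Bool` which is `true` when the Pursuer is next
to move. -/
noncomputable def labelInit (G : GCR PP PE) : (PP × PE) × Bool → ℕ∞ :=
  fun s => if G.F s.1.1 s.1.2 then 0 else ⊤

/-- One round of updates of the labelling procedure: a non-final Pursuer-to-move state
gets `1 +` the minimum label over its out-neighbours, and a non-final Evader-to-move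
state gets `1 +` the maximum label over its out-neighbours. -/
noncomputable def labelStep (G : GCR PP PE) (f : (PP × PE) × Bool → ℕ∞) :
    (PP × PE) × Bool → ℕ∞ :=
  fun s =>
    if G.F s.1.1 s.1.2 then 0
    else if s.2 then 1 + ⨅ w ∈ G.AP s.1.1 s.1.2, f ((w, s.1.2), false)
    else 1 + ⨆ x ∈ G.AE s.1.1 s.1.2, f ((s.1.1, x), true)

/-- The stable labelling of the state digraph, obtained by repeating the update
procedure until no label changes (the iterates decrease pointwise, so the stable
labelling is the pointwise infimum of the iterates). -/
noncomputable def label (G : GCR PP PE) (s : (PP × PE) × Bool) : ℕ∞ :=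
  ⨅ n : ℕ, (G.labelStep)^[n] G.labelInit s

/-! ### Length of the game -/

/-- The number of moves the Pursuer makes before the position first lies in `F`, in the
play determined by `σ` and `τ` (the Pursuer moves at odd time-steps, so has made
`(n+1)/2` moves by time-step `n`); `⊤` if the position never lies in `F`. -/
noncomputable def captureMoves (G : GCR PP PE) (σ : PStrat G) (τ : EStrat G) : ℕ∞ :=
  ⨅ (n : ℕ) (_ : G.F (pos G σ τ n).1 (pos G σ τ n).2), (((n + 1) / 2 : ℕ) : ℕ∞)

/-- The length of the game under optimal play: the minimum over valid Pursuer strategies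
of the maximum over valid Evader strategies of the number of Pursuer moves made before
the position first lies in `F`. -/
noncomputable def gameLength (G : GCR PP PE) : ℕ∞ :=
  ⨅ (σ : PStrat G) (_ : σ.Valid), ⨆ (τ : EStrat G) (_ : τ.Valid), G.captureMoves σ τ

/-- The quantity `ℓ(p,q)` from Corollary 1. -/
noncomputable def ell (G : GCR PP PE) (p : PP) (q : PE) : ℕ∞ :=
  if G.Rel q p then ⨅ (j : ℕ) (_ : G.rel j q p), (j : ℕ∞)
  else 1 + ⨆ w ∈ G.AP p q, ⨅ (j : ℕ) (_ : G.rel j q w), (j : ℕ∞)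

/-! ### Position independent games -/

/-- A game is position independent (with position digraphs given by out-neighbour maps
`GP` and `GE`) if, from any non-final position, the allowed moves of the Pursuer depend
only on the Pursuer's position and the allowed moves of the Evader depend only on the
Evader's position. -/
def PositionIndependent (G : GCR PP PE) (GP : PP → Set PP) (GE : PE → Set PE) : Prop :=
  ∀ p q, ¬ G.F p q → G.AP p q = GP p ∧ G.AE p q = GE q

/-- A vertex `(p,q)` of the round summary digraph is removable with respect to a set `S`
of vertices. -/
def Removable (G : GCR PP PE) (GP : PP → Set PP) (GE : PE → Set PE)
    (v : PP × PE) (S : Set (PP × PE)) : Prop :=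
  G.F v.1 v.2 ∨ ∀ x ∈ GE v.2, G.F v.1 x ∨ ∃ y ∈ GP v.1, (y, x) ∈ S

/-- A removable vertex ordering of the round summary digraph: a sequence of vertices in
which each element is removable with respect to the set of vertices preceding it, and
there is a Pursuer start position `p ∈ I_P` such that for all `q ∈ I_E(p)` either
`(p,q) ∈ F` or the Pursuer has an allowed move `w` with `(w,q)` in the sequence. -/
def RemovableOrdering (G : GCR PP PE) (GP : PP → Set PP) (GE : PE → Set PE)
    (L : List (PP × PE)) : Prop :=
  (∀ i : Fin L.length, G.Removable GP GE (L.get i)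
      {w | ∃ j : Fin L.length, (j : ℕ) < (i : ℕ) ∧ L.get j = w}) ∧
  ∃ p, G.IP p ∧ ∀ q, G.IE p q → G.F p q ∨ ∃ w ∈ GP p, (w, q) ∈ L


/-! ### Auxiliary development for the proof -/

/-- The player-to-move state `s` (with `s.2 = true` meaning Pursuer to move) is one from
which the Pursuer can force the position into `F` within `m` further single moves. -/
def W (G : GCR PP PE) : ℕ → (PP × PE) × Bool → Prop
  | 0, s => G.F s.1.1 s.1.2
  | (m+1), s => G.F s.1.1 s.1.2 ∨
      if s.2 then ∃ w ∈ G.AP s.1.1 s.1.2, G.W m ((w, s.1.2), false)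
      else ∀ x ∈ G.AE s.1.1 s.1.2, G.W m ((s.1.1, x), true)

lemma W_zero_iff (G : GCR PP PE) (s) : G.W 0 s ↔ G.F s.1.1 s.1.2 := by rw [W]

lemma W_succ_iff (G : GCR PP PE) (m : ℕ) (s) :
    G.W (m+1) s ↔ (G.F s.1.1 s.1.2 ∨
      if s.2 then ∃ w ∈ G.AP s.1.1 s.1.2, G.W m ((w, s.1.2), false)
      else ∀ x ∈ G.AE s.1.1 s.1.2, G.W m ((s.1.1, x), true)) := by rw [W]

lemma F_of_W_zero (G : GCR PP PE) {s} (h : G.W 0 s) : G.F s.1.1 s.1.2 :=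
  (G.W_zero_iff s).1 h

lemma W_succ_of (G : GCR PP PE) : ∀ {m : ℕ} {s}, G.W m s → G.W (m+1) s := by
  intro m
  induction m with
  | zero => intro s h; exact (G.W_succ_iff 0 s).2 (Or.inl ((G.W_zero_iff s).1 h))
  | succ m ih =>
    intro s h
    rcases (G.W_succ_iff m s).1 h with h | h
    · exact (G.W_succ_iff (m+1) s).2 (Or.inl h)
    · refine (G.W_succ_iff (m+1) s).2 (Or.inr ?_)
      by_cases hb : s.2 = true
      · rw [if_pos hb] at h ⊢
        obtain ⟨w, hw, h⟩ := h
        exact ⟨w, hw, ih h⟩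
      · rw [if_neg hb] at h ⊢
        exact fun x hx => ih (h x hx)

lemma W_mono (G : GCR PP PE) {m m' : ℕ} {s} (hle : m ≤ m') (h : G.W m s) : G.W m' s := by
  induction hle with
  | refl => exact h
  | step _ ih => exact G.W_succ_of ih

/-- Finite label after `m` iterations implies `W m`. -/
lemma W_of_iter_ne_top (G : GCR PP PE) :
    ∀ (m : ℕ) (s), (G.labelStep)^[m] G.labelInit s ≠ ⊤ → G.W m s := by
  intro m
  induction m with
  | zero =>
    intro s h
    simp only [Function.iterate_zero, id_eq, labelInit] at h
    rw [W_zero_iff]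
    by_contra hF
    exact h (if_neg hF)
  | succ m ih =>
    intro s h
    rw [Function.iterate_succ_apply'] at h
    by_cases hF : G.F s.1.1 s.1.2
    · exact (G.W_succ_iff m s).2 (Or.inl hF)
    · refine (G.W_succ_iff m s).2 (Or.inr ?_)
      simp only [labelStep, if_neg hF] at h
      by_cases hb : s.2 = true
      · rw [if_pos hb] at h ⊢
        have hinf : ⨅ w ∈ G.AP s.1.1 s.1.2,
            (G.labelStep)^[m] G.labelInit ((w, s.1.2), false) ≠ ⊤ := by
          intro heq
          rw [heq] at h
          simp at h
        have : ∃ w ∈ G.AP s.1.1 s.1.2,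
            (G.labelStep)^[m] G.labelInit ((w, s.1.2), false) ≠ ⊤ := by
          by_contra hc
          push_neg at hc
          exact hinf (by simp [iInf_eq_top]; exact hc)
        obtain ⟨w, hw, hne⟩ := this
        exact ⟨w, hw, ih _ hne⟩
      · rw [if_neg hb] at h ⊢
        intro x hx
        refine ih _ ?_
        have hsup : ⨆ x ∈ G.AE s.1.1 s.1.2,
            (G.labelStep)^[m] G.labelInit ((s.1.1, x), true) ≠ ⊤ := by
          intro heq
          rw [heq] at h
          simp at h
        exact ne_top_of_le_ne_top hsup (le_biSup (fun x => (G.labelStep)^[m] G.labelInit ((s.1.1, x), true)) hx)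

/-- `W m` implies finite label after `m` iterations. -/
lemma iter_ne_top_of_W [Fintype PE] (G : GCR PP PE) :
    ∀ (m : ℕ) (s), G.W m s → (G.labelStep)^[m] G.labelInit s ≠ ⊤ := by
  intro m
  induction m with
  | zero =>
    intro s h
    have hF := (G.W_zero_iff s).1 h
    simp [labelInit, if_pos hF]
  | succ m ih =>
    intro s h
    rw [Function.iterate_succ_apply']
    by_cases hF : G.F s.1.1 s.1.2
    · simp [labelStep, if_pos hF]
    · simp only [labelStep, if_neg hF]
      rcases (G.W_succ_iff m s).1 h with h' | h'
      · exact absurd h' hF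
      · by_cases hb : s.2 = true
        · rw [if_pos hb] at h' ⊢
          obtain ⟨w, hw, hWm⟩ := h'
          have h1 := ih _ hWm
          have hle : ⨅ w ∈ G.AP s.1.1 s.1.2,
              (G.labelStep)^[m] G.labelInit ((w, s.1.2), false)
              ≤ (G.labelStep)^[m] G.labelInit ((w, s.1.2), false) := biInf_le _ hw
          have h2 : ⨅ w ∈ G.AP s.1.1 s.1.2,
              (G.labelStep)^[m] G.labelInit ((w, s.1.2), false) ≠ ⊤ :=
            ne_top_of_le_ne_top h1 hle
          refine WithTop.add_ne_top.2 ?_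
          exact ⟨WithTop.one_ne_top, h2⟩
        · rw [if_neg hb] at h' ⊢
          have hfin : ∀ x, x ∈ G.AE s.1.1 s.1.2 →
              (G.labelStep)^[m] G.labelInit ((s.1.1, x), true) ≠ ⊤ :=
            fun x hx => ih _ (h' x hx)
          set g := fun x : PE => (G.labelStep)^[m] G.labelInit ((s.1.1, x), true) with hg
          set N : ℕ := Finset.univ.sup (fun x : PE => (g x).toNat) with hN
          have hbound : ⨆ x ∈ G.AE s.1.1 s.1.2, g x ≤ (N : ℕ∞) := by
            refine iSup₂_le fun x hx => ?_
            have : g x = ((g x).toNat : ℕ∞) := (ENat.coe_toNat (hfin x hx)).symm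
            rw [this]
            exact Nat.cast_le.2 (Finset.le_sup (f := fun x : PE => (g x).toNat) (Finset.mem_univ x))
          have h2 : ⨆ x ∈ G.AE s.1.1 s.1.2, g x ≠ ⊤ :=
            ne_top_of_le_ne_top (WithTop.natCast_ne_top N) hbound
          refine WithTop.add_ne_top.2 ?_
          exact ⟨WithTop.one_ne_top, h2⟩

lemma label_ne_top_iff [Fintype PE] (G : GCR PP PE) (s) :
    G.label s ≠ ⊤ ↔ ∃ m, G.W m s := by
  constructor
  · intro h
    have : ∃ m, (G.labelStep)^[m] G.labelInit s ≠ ⊤ := by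
      by_contra hc
      push_neg at hc
      exact h (by rw [label]; simp [iInf_eq_top]; exact hc)
    obtain ⟨m, hm⟩ := this
    exact ⟨m, G.W_of_iter_ne_top m s hm⟩
  · rintro ⟨m, hm⟩
    have h1 := G.iter_ne_top_of_W m s hm
    exact ne_top_of_le_ne_top h1 (iInf_le _ m)

/-- The Pursuer's positional move: a move minimizing the capture time. -/
noncomputable def pmove (G : GCR PP PE) (c : PP × PE) : PP :=
  if h : ∃ n, ∃ w ∈ G.AP c.1 c.2, G.W n ((w, c.2), false) then
    (Nat.find_spec h).choose
  else if hF : ¬ G.F c.1 c.2 then (G.AP_nonempty c.1 c.2 hF).choose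
  else c.1

lemma pmove_mem (G : GCR PP PE) (c : PP × PE) (hF : ¬ G.F c.1 c.2) :
    G.pmove c ∈ G.AP c.1 c.2 := by
  by_cases h : ∃ n, ∃ w ∈ G.AP c.1 c.2, G.W n ((w, c.2), false)
  · rw [pmove, dif_pos h]
    exact (Nat.find_spec h).choose_spec.1
  · rw [pmove, dif_neg h, dif_pos hF]
    exact (G.AP_nonempty c.1 c.2 hF).choose_spec

lemma pmove_spec (G : GCR PP PE) {c : PP × PE} {m : ℕ} (hF : ¬ G.F c.1 c.2)
    (hW : G.W (m+1) (c, true)) : G.W m ((G.pmove c, c.2), false) := by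
  rcases (G.W_succ_iff m (c, true)).1 hW with h | h
  · exact absurd h hF
  · rw [if_pos rfl] at h
    obtain ⟨w, hw, hWm⟩ := h
    have hex : ∃ n, ∃ w ∈ G.AP c.1 c.2, G.W n ((w, c.2), false) := ⟨m, w, hw, hWm⟩
    have hfind : Nat.find hex ≤ m := Nat.find_le ⟨w, hw, hWm⟩
    have hspec := (Nat.find_spec hex).choose_spec.2
    rw [pmove, dif_pos hex]
    exact G.W_mono hfind hspec

/-- The Evader's positional move: a safe move if one exists. -/
noncomputable def emove (G : GCR PP PE) (c : PP × PE) : PE :=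
  if h : ∃ x ∈ G.AE c.1 c.2, ∀ m, ¬ G.W m ((c.1, x), true) then h.choose
  else if hF : ¬ G.F c.1 c.2 then (G.AE_nonempty c.1 c.2 hF).choose
  else c.2

lemma emove_mem (G : GCR PP PE) (c : PP × PE) (hF : ¬ G.F c.1 c.2) :
    G.emove c ∈ G.AE c.1 c.2 := by
  by_cases h : ∃ x ∈ G.AE c.1 c.2, ∀ m, ¬ G.W m ((c.1, x), true)
  · rw [emove, dif_pos h]
    exact h.choose_spec.1
  · rw [emove, dif_neg h, dif_pos hF]
    exact (G.AE_nonempty c.1 c.2 hF).choose_spec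

lemma emove_spec (G : GCR PP PE) {c : PP × PE}
    (h : ∃ x ∈ G.AE c.1 c.2, ∀ m, ¬ G.W m ((c.1, x), true)) :
    ∀ m, ¬ G.W m ((c.1, G.emove c), true) := by
  rw [emove, dif_pos h]
  exact h.choose_spec.2

/-- If the Evader to move is in a safe state, it has a safe move. -/
lemma escape_exists [Fintype PE] (G : GCR PP PE) {c : PP × PE}
    (_hF : ¬ G.F c.1 c.2) (h : ∀ m, ¬ G.W m (c, false)) :
    ∃ x ∈ G.AE c.1 c.2, ∀ m, ¬ G.W m ((c.1, x), true) := by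
  by_contra hc
  push_neg at hc
  set k : PE → ℕ := fun x =>
    if hx : ∃ m, G.W m ((c.1, x), true) then Nat.find hx else 0 with hk
  set M : ℕ := Finset.univ.sup k with hM
  have hall : ∀ x ∈ G.AE c.1 c.2, G.W M ((c.1, x), true) := by
    intro x hx
    obtain ⟨m, hm⟩ := hc x hx
    have hex : ∃ m, G.W m ((c.1, x), true) := ⟨m, hm⟩
    have h1 : G.W (k x) ((c.1, x), true) := by
      simp only [hk]
      rw [dif_pos hex]
      exact Nat.find_spec hex
    exact G.W_mono (Finset.le_sup (f := k) (Finset.mem_univ x)) h1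
  refine h (M+1) ((G.W_succ_iff M (c, false)).2 (Or.inr ?_))
  rw [if_neg Bool.false_ne_true]
  exact hall

lemma play_snd (G : GCR PP PE) (σ : PStrat G) (τ : EStrat G) (n : ℕ) :
    ∃ t, (G.play σ τ n).2 = G.pos σ τ n :: t := by
  cases n with
  | zero => exact ⟨[], rfl⟩
  | succ n => exact ⟨(G.play σ τ n).2, rfl⟩

lemma pos_succ_even (G : GCR PP PE) (σ : PStrat G) (τ : EStrat G) {n : ℕ}
    (h : n % 2 = 0) :
    G.pos σ τ (n+1) = (σ.move (G.play σ τ n).2, (G.pos σ τ n).2) := by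
  simp [pos, play, h]

lemma pos_succ_odd (G : GCR PP PE) (σ : PStrat G) (τ : EStrat G) {n : ℕ}
    (h : n % 2 = 1) :
    G.pos σ τ (n+1) = ((G.pos σ τ n).1, τ.move (G.play σ τ n).2) := by
  have h0 : ¬ n % 2 = 0 := by omega
  simp [pos, play, h0]

/-- The positional Pursuer strategy starting at `p`. -/
noncomputable def chaseStrat (G : GCR PP PE) (p : PP) : PStrat G :=
  ⟨p, fun l => match l with | [] => p | c :: _ => G.pmove c⟩

/-- The positional Evader strategy (with fallback position `q0`). -/
noncomputable def evadeInit (G : GCR PP PE) (q0 : PE) (p : PP) : PE :=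
  if h : ∃ q, G.IE p q ∧ ∀ m, ¬ G.W m ((p, q), true) then h.choose
  else if h2 : G.IP p then h2.choose else q0

noncomputable def evadeStrat (G : GCR PP PE) (q0 : PE) : EStrat G :=
  ⟨G.evadeInit q0, fun l => match l with | [] => q0 | c :: _ => G.emove c⟩

lemma evadeInit_spec (G : GCR PP PE) (q0 : PE) (p : PP)
    (h : ∃ q, G.IE p q ∧ ∀ m, ¬ G.W m ((p, q), true)) :
    ∀ m, ¬ G.W m ((p, G.evadeInit q0 p), true) := by
  rw [evadeInit, dif_pos h]
  exact h.choose_spec.2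

lemma evadeStrat_valid (G : GCR PP PE) (q0 : PE) : (G.evadeStrat q0).Valid := by
  constructor
  · intro p hp
    show G.IE p (G.evadeInit q0 p)
    by_cases h : ∃ q, G.IE p q ∧ ∀ m, ¬ G.W m ((p, q), true)
    · rw [evadeInit, dif_pos h]
      exact h.choose_spec.1
    · rw [evadeInit, dif_neg h, dif_pos hp]
      exact hp.choose_spec
  · intro h c hF
    exact G.emove_mem c hF

/-- The Pursuer has a winning strategy if and only if there is a start position
`p ∈ I_P` such that for every `q ∈ I_E(p)` the stable label of the Pursuer-to-move state
`((p,q),P)` in the state digraph is finite. -/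
theorem pursuerWins_iff_label_finite [Fintype PP] [Fintype PE] (G : GCR PP PE) :
    G.PursuerWins ↔
      ∃ p, G.IP p ∧ ∀ q, G.IE p q → G.label ((p, q), true) ≠ ⊤ := by
  constructor
  · rintro ⟨σ, hσ, hwin⟩
    by_contra hne
    push_neg at hne
    obtain ⟨p0, q0, hpq0⟩ := G.I_nonempty
    set τ : EStrat G := G.evadeStrat q0 with hτdef
    have inv : ∀ n, (n % 2 = 0 → ∀ m, ¬ G.W m (G.pos σ τ n, true)) ∧
        (n % 2 = 1 → ∀ m, ¬ G.W m (G.pos σ τ n, false)) := by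
      intro n
      induction n with
      | zero =>
        refine ⟨fun _ => ?_, fun h => by omega⟩
        obtain ⟨q, hq, hlab⟩ := hne σ.init hσ.1
        have hex : ∃ q', G.IE σ.init q' ∧ ∀ m, ¬ G.W m ((σ.init, q'), true) := by
          refine ⟨q, hq, fun m hm => ?_⟩
          exact (G.label_ne_top_iff ((σ.init, q), true)).2 ⟨m, hm⟩ hlab
        have hpos : G.pos σ τ 0 = (σ.init, G.evadeInit q0 σ.init) := rfl
        rw [hpos]
        exact G.evadeInit_spec q0 σ.init hex
      | succ n ih =>
        obtain ⟨t, ht⟩ := G.play_snd σ τ n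
        rcases Nat.mod_two_eq_zero_or_one n with hn | hn
        · refine ⟨fun h => by omega, fun _ => ?_⟩
          have hWn := ih.1 hn
          have hF : ¬ G.F (G.pos σ τ n).1 (G.pos σ τ n).2 :=
            fun hf => hWn 0 ((G.W_zero_iff _).2 hf)
          have hmem : σ.move (G.play σ τ n).2 ∈ G.AP (G.pos σ τ n).1 (G.pos σ τ n).2 := by
            rw [ht]
            exact hσ.2 t (G.pos σ τ n) hF
          intro m hm
          rw [G.pos_succ_even σ τ hn] at hm
          refine hWn (m+1) ((G.W_succ_iff m (G.pos σ τ n, true)).2 (Or.inr ?_))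
          rw [if_pos rfl]
          exact ⟨σ.move (G.play σ τ n).2, hmem, hm⟩
        · refine ⟨fun _ => ?_, fun h => by omega⟩
          have hWn := ih.2 hn
          have hF : ¬ G.F (G.pos σ τ n).1 (G.pos σ τ n).2 :=
            fun hf => hWn 0 ((G.W_zero_iff _).2 hf)
          have hesc := G.escape_exists hF hWn
          have hmv : τ.move (G.play σ τ n).2 = G.emove (G.pos σ τ n) := by
            rw [ht]; rfl
          rw [G.pos_succ_odd σ τ hn, hmv]
          exact G.emove_spec hesc
    obtain ⟨n, hFn⟩ := hwin τ (G.evadeStrat_valid q0)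
    rcases Nat.mod_two_eq_zero_or_one n with hn | hn
    · exact (inv n).1 hn 0 ((G.W_zero_iff (G.pos σ τ n, true)).2 hFn)
    · exact (inv n).2 hn 0 ((G.W_zero_iff (G.pos σ τ n, false)).2 hFn)
  · rintro ⟨p, hIP, hfin⟩
    refine ⟨G.chaseStrat p, ⟨hIP, fun h c hF => G.pmove_mem c hF⟩, ?_⟩
    intro τ hτ
    set σ : PStrat G := G.chaseStrat p with hσdef
    have key : ∀ m n,
        ((n % 2 = 0 ∧ G.W m (G.pos σ τ n, true)) ∨
         (n % 2 = 1 ∧ G.W m (G.pos σ τ n, false))) →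
        ∃ k, G.F (pos G σ τ k).1 (pos G σ τ k).2 := by
      intro m
      induction m with
      | zero =>
        rintro n (⟨_, h⟩ | ⟨_, h⟩) <;> exact ⟨n, (G.W_zero_iff _).1 h⟩
      | succ m ih =>
        rintro n hcase
        by_cases hF : G.F (G.pos σ τ n).1 (G.pos σ τ n).2
        · exact ⟨n, hF⟩
        · obtain ⟨t, ht⟩ := G.play_snd σ τ n
          rcases hcase with ⟨hn, hW⟩ | ⟨hn, hW⟩
          · have hmv : σ.move (G.play σ τ n).2 = G.pmove (G.pos σ τ n) := by
              rw [ht]; rfl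
            refine ih (n+1) (Or.inr ⟨by omega, ?_⟩)
            rw [G.pos_succ_even σ τ hn, hmv]
            exact G.pmove_spec hF hW
          · rcases (G.W_succ_iff m (G.pos σ τ n, false)).1 hW with h' | h'
            · exact absurd h' hF
            · rw [if_neg Bool.false_ne_true] at h'
              have hmem : τ.move (G.play σ τ n).2 ∈ G.AE (G.pos σ τ n).1 (G.pos σ τ n).2 := by
                rw [ht]
                exact hτ.2 t (G.pos σ τ n) hF
              refine ih (n+1) (Or.inl ⟨by omega, ?_⟩)
              rw [G.pos_succ_odd σ τ hn]
              exact h' _ hmem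
    have hIE : G.IE p (τ.init p) := hτ.1 p hIP
    obtain ⟨m0, hm0⟩ := (G.label_ne_top_iff ((p, τ.init p), true)).1 (hfin _ hIE)
    exact key m0 0 (Or.inl ⟨rfl, hm0⟩)

end GCR
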